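/- arXiv:0711.1771 — 2 statements merged into one kernel-verified Lean document; each statement's English description precedes it below -/
import Mathlib

section
/- For λ, μ ∈ Q with λμ(λ²−μ²) ≠ 0, the curve y² = x(x+μ²)(x+λ²) is an elliptic curve whose rational torsion contains Z/4Z ⊕ Z/2Z; specifically with μ = 1, the point P = (λ, λ(1+λ)) has order 4 with 2P = (0,0), and Q = (−λ², 0) is a 2-torsion point not in ⟨P⟩ (for λ ≠ 0, ±1). -/
open WeierstrassCurve.Affine WeierstrassCurve.Affine.Point

lemma my_some_congr {C : WeierstrassCurve.Affine ℚ} {x₁ y₁ x₂ y₂ : ℚ}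
    (h₁ : C.Nonsingular x₁ y₁) (h₂ : C.Nonsingular x₂ y₂) (hx : x₁ = x₂) (hy : y₁ = y₂) :
    Point.some _ _ h₁ = Point.some _ _ h₂ := by subst hx; subst hy; rfl

lemma my_some_ne {C : WeierstrassCurve.Affine ℚ} {x₁ y₁ x₂ y₂ : ℚ}
    (h₁ : C.Nonsingular x₁ y₁) (h₂ : C.Nonsingular x₂ y₂) (hx : x₁ ≠ x₂) :
    Point.some _ _ h₁ ≠ Point.some _ _ h₂ := by
  intro h
  simp only [Point.some.injEq] at h
  exact hx h.1

lemma my_hom {G : Type} [AddCommGroup G] (P Q : G) (hP : addOrderOf P = 4)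
    (hQ : addOrderOf Q = 2) (hQP : Q ∉ AddSubgroup.zmultiples P) :
    ∃ f : (ZMod 4 × ZMod 2) →+ G, Function.Injective f := by
  have h4 : (((4 : ℕ) : ℤ)) • P = 0 := by
    rw [natCast_zsmul, ← hP]; exact addOrderOf_nsmul_eq_zero P
  have h2 : (((2 : ℕ) : ℤ)) • Q = 0 := by
    rw [natCast_zsmul, ← hQ]; exact addOrderOf_nsmul_eq_zero Q
  set g₁ : ZMod 4 →+ G := ZMod.lift 4 ⟨zmultiplesHom G P, by simpa using h4⟩ with hg₁
  set g₂ : ZMod 2 →+ G := ZMod.lift 2 ⟨zmultiplesHom G Q, by simpa using h2⟩ with hg₂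
  refine ⟨(g₁.comp (AddMonoidHom.fst _ _)) + (g₂.comp (AddMonoidHom.snd _ _)), ?_⟩
  rw [injective_iff_map_eq_zero]
  rintro ⟨a, b⟩ hab
  have ha : g₁ a = (ZMod.cast a : ℤ) • P := by
    conv_lhs => rw [← ZMod.intCast_zmod_cast a]
    rw [hg₁, ZMod.lift_coe]; rfl
  have hb : g₂ b = (ZMod.cast b : ℤ) • Q := by
    conv_lhs => rw [← ZMod.intCast_zmod_cast b]
    rw [hg₂, ZMod.lift_coe]; rfl
  simp only [AddMonoidHom.add_apply, AddMonoidHom.comp_apply, 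
    AddMonoidHom.coe_fst, AddMonoidHom.coe_snd] at hab
  change g₁ a + g₂ b = 0 at hab
  rw [ha, hb] at hab
  have hbcase : b = 0 ∨ b = 1 := by fin_cases b <;> tauto
  have hb0 : b = 0 := by
    rcases hbcase with h | h
    · exact h
    · exfalso
      apply hQP
      subst h
      have : (ZMod.cast (1 : ZMod 2) : ℤ) = 1 := by decide
      rw [this, one_zsmul] at hab
      exact ⟨-(ZMod.cast a : ℤ), by simp only [zmultiplesHom_apply] at *; rw [neg_zsmul, neg_eq_iff_add_eq_zero]; exact hab⟩
  subst hb0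
  have : (ZMod.cast (0 : ZMod 2) : ℤ) = 0 := by decide
  rw [this, zero_zsmul, add_zero] at hab
  have hdvd : ((addOrderOf P : ℕ) : ℤ) ∣ (ZMod.cast a : ℤ) :=
    addOrderOf_dvd_iff_zsmul_eq_zero.mpr hab
  rw [hP] at hdvd
  have ha0 : a = 0 := by
    rw [← ZMod.intCast_zmod_cast a, ZMod.intCast_zmod_eq_zero_iff_dvd]
    exact hdvd
  simp [ha0]

lemma curve_facts (l m : ℚ) (hl : l ≠ 0) (hm : m ≠ 0) (hlm : l ^ 2 - m ^ 2 ≠ 0)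
    (C : WeierstrassCurve.Affine ℚ) (h1 : C.a₁ = 0) (h2 : C.a₂ = m ^ 2 + l ^ 2)
    (h3 : C.a₃ = 0) (h4 : C.a₄ = m ^ 2 * l ^ 2) (h6 : C.a₆ = 0)
    (x₀ y₀ : ℚ) (hx₀ : x₀ = l * m) (hy₀ : y₀ = l * m * (l + m)) :
    ∃ (hP : C.Nonsingular x₀ y₀) (h0 : C.Nonsingular 0 0) (hQ : C.Nonsingular (-l ^ 2) 0),
      Point.some _ _ hP + Point.some _ _ hP = Point.some _ _ h0 ∧
      addOrderOf (Point.some _ _ hP) = 4 ∧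
      addOrderOf (Point.some _ _ hQ) = 2 ∧
      Point.some _ _ hQ ∉ AddSubgroup.zmultiples (Point.some _ _ hP) := by
  subst hx₀ hy₀
  have hlm1 : l + m ≠ 0 := fun h => hlm (by rw [show l = -m by linarith]; ring)
  have hy1 : l * m * (l + m) ≠ 0 := by
    exact mul_ne_zero (mul_ne_zero hl hm) hlm1
  have hP : C.Nonsingular (l * m) (l * m * (l + m)) := by
    rw [nonsingular_iff, equation_iff, h1, h2, h3, h4, h6]
    refine ⟨by ring, Or.inr ?_⟩
    intro h
    apply hy1
    linarith
  have h0 : C.Nonsingular 0 0 := by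
    rw [nonsingular_iff, equation_iff, h1, h2, h3, h4, h6]
    refine ⟨by ring, Or.inl ?_⟩
    intro h
    apply mul_ne_zero (pow_ne_zero 2 hm) (pow_ne_zero 2 hl)
    linarith
  have hQ : C.Nonsingular (-l ^ 2) 0 := by
    rw [nonsingular_iff, equation_iff, h1, h2, h3, h4, h6]
    refine ⟨by ring, Or.inl ?_⟩
    intro h
    apply mul_ne_zero (pow_ne_zero 2 hl) hlm
    nlinarith [h]
  have hyne : l * m * (l + m) ≠ C.negY (l * m) (l * m * (l + m)) := by
    rw [negY, h1, h3]
    intro h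
    apply hy1
    linarith
  have hslope : C.slope (l * m) (l * m) (l * m * (l + m)) (l * m * (l + m)) = l + m := by
    rw [slope_of_Y_ne rfl hyne, negY, h1, h2, h3, h4]
    rw [div_eq_iff (by intro h; apply hy1; linarith)]
    ring
  have hdbl : Point.some _ _ hP + Point.some _ _ hP = Point.some _ _ h0 := by
    rw [add_self_of_Y_ne hyne]
    exact my_some_congr _ _
      (by rw [hslope, addX, h1, h2]; ring)
      (by simp only [addY, negAddY, addX, negY, hslope, h1, h2, h3]; ring)
  have hQ2 : Point.some _ _ hQ + Point.some _ _ hQ = 0 :=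
    add_self_of_Y_eq (by rw [negY, h1, h3]; ring)
  have h02 : Point.some _ _ h0 + Point.some _ _ h0 = 0 :=
    add_self_of_Y_eq (by rw [negY, h1, h3]; ring)
  have h2smul : (2 : ℕ) • Point.some _ _ hP = Point.some _ _ h0 := by rw [two_nsmul]; exact hdbl
  have h4smul : (4 : ℕ) • Point.some _ _ hP = 0 := by
    rw [show (4 : ℕ) = 2 * 2 from rfl, mul_smul, h2smul, two_nsmul]
    exact h02
  have hordP : addOrderOf (Point.some _ _ hP) = 4 := by
    have := addOrderOf_eq_prime_pow (x := Point.some _ _ hP) (p := 2) (n := 1)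
      (by rw [pow_one, h2smul]; exact some_ne_zero h0)
      (by rw [show (2 : ℕ) ^ (1 + 1) = 4 from rfl]; exact h4smul)
    rw [this]; norm_num
  have hordQ : addOrderOf (Point.some _ _ hQ) = 2 :=
    addOrderOf_eq_prime (by rw [two_nsmul]; exact hQ2) (some_ne_zero hQ)
  have hxPQ : -l ^ 2 ≠ l * m := by
    intro h
    rcases mul_eq_zero.mp (show l * (l + m) = 0 by linear_combination -h) with h' | h'
    · exact hl h'
    · exact hlm1 h'
  refine ⟨hP, h0, hQ, hdbl, hordP, hordQ, ?_⟩
  rintro hmem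
  obtain ⟨n, hn⟩ := AddSubgroup.mem_zmultiples_iff.mp hmem
  rw [← mod_addOrderOf_zsmul, hordP] at hn
  have hb1 : 0 ≤ n % ((4 : ℕ) : ℤ) := Int.emod_nonneg n (by norm_num)
  have hb2 : n % ((4 : ℕ) : ℤ) < 4 := by
    have := Int.emod_lt_of_pos n (show (0:ℤ) < ((4 : ℕ) : ℤ) by norm_num)
    simpa using this
  set k : ℤ := n % ((4 : ℕ) : ℤ) with hk
  have h4z : (4 : ℤ) • Point.some _ _ hP = 0 := by
    rw [show (4 : ℤ) = ((4 : ℕ) : ℤ) by norm_num, natCast_zsmul]; exact h4smul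
  have hcases : k = 0 ∨ k = 1 ∨ k = 2 ∨ k = 3 := by omega
  rcases hcases with h | h | h | h <;> rw [h] at hn
  · rw [zero_zsmul] at hn
    exact some_ne_zero hQ hn.symm
  · rw [one_zsmul] at hn
    exact my_some_ne hP hQ (fun hh => hxPQ hh.symm) hn
  · rw [show (2 : ℤ) = ((2 : ℕ) : ℤ) by norm_num, natCast_zsmul, h2smul] at hn
    exact my_some_ne h0 hQ (by intro hh; exact hl (by nlinarith [hh])) hn
  · have : Point.some _ _ hQ = -(Point.some _ _ hP) := by
      rw [← hn, show (3 : ℤ) = 4 - 1 by norm_num, sub_zsmul, h4z, one_zsmul, zero_add]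
    rw [neg_some] at this
    exact my_some_ne hQ ((nonsingular_neg ..).mpr hP) hxPQ this


open WeierstrassCurve.Affine in
/-- For `λ, μ ∈ ℚ` with `λμ(λ² − μ²) ≠ 0`, the curve `y² = x(x + μ²)(x + λ²)` is an elliptic
curve whose rational torsion contains `ℤ/4ℤ ⊕ ℤ/2ℤ`; specifically with `μ = 1` (and
`λ ≠ 0, ±1`), the point `P = (λ, λ(1+λ))` has order `4` with `2P = (0,0)`, and `Q = (−λ², 0)`
is a `2`-torsion point not in `⟨P⟩`. -/
theorem stmt_12 (lam mu : ℚ) (hlm : lam * mu * (lam ^ 2 - mu ^ 2) ≠ 0)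
    (Wgen W : WeierstrassCurve.Affine ℚ)
    (hWgen : Wgen = { a₁ := 0, a₂ := mu ^ 2 + lam ^ 2, a₃ := 0, a₄ := mu ^ 2 * lam ^ 2,
                      a₆ := 0 })
    (hW : W = { a₁ := 0, a₂ := 1 + lam ^ 2, a₃ := 0, a₄ := lam ^ 2, a₆ := 0 })
    (hlam : lam ≠ 0 ∧ lam ≠ 1 ∧ lam ≠ -1) :
    (Wgen.Δ ≠ 0 ∧ ∃ f : (ZMod 4 × ZMod 2) →+ Wgen.Point, Function.Injective f) ∧
    (∃ hP : W.Nonsingular lam (lam * (1 + lam)),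
      addOrderOf (Point.some _ _ hP) = 4 ∧
      (∃ h0 : W.Nonsingular 0 0, 2 • Point.some _ _ hP = Point.some _ _ h0) ∧
      ∃ hQ : W.Nonsingular (-lam ^ 2) 0,
        addOrderOf (Point.some _ _ hQ) = 2 ∧
        Point.some _ _ hQ ∉ AddSubgroup.zmultiples (Point.some _ _ hP)) := by
  obtain ⟨hlam0, hlam1, hlamm1⟩ := hlam
  have hmu : mu ≠ 0 := by rintro rfl; simp at hlm
  have hd : lam ^ 2 - mu ^ 2 ≠ 0 := by
    intro h; apply hlm; rw [h, mul_zero]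
  have hd1 : lam ^ 2 - 1 ^ 2 ≠ 0 := by
    intro h
    rcases mul_eq_zero.mp (show (lam - 1) * (lam + 1) = 0 by linear_combination h) with h' | h'
    · exact hlam1 (by linarith)
    · exact hlamm1 (by linarith)
  constructor
  · constructor
    · have hΔ : Wgen.Δ = 16 * (lam * mu * (lam * mu * (lam ^ 2 - mu ^ 2))) ^ 2 := by
        rw [hWgen]
        simp only [WeierstrassCurve.Δ, WeierstrassCurve.b₂, WeierstrassCurve.b₄,
          WeierstrassCurve.b₆, WeierstrassCurve.b₈]
        ring
      rw [hΔ]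
      exact mul_ne_zero (by norm_num) (pow_ne_zero 2 (mul_ne_zero (mul_ne_zero hlam0 hmu) hlm))
    · obtain ⟨hP, h0, hQ, _, hord4, hord2, hnot⟩ :=
        curve_facts lam mu hlam0 hmu hd Wgen (by rw [hWgen]) (by rw [hWgen]) (by rw [hWgen])
          (by rw [hWgen]) (by rw [hWgen]) (lam * mu) (lam * mu * (lam + mu)) rfl rfl
      exact my_hom _ _ hord4 hord2 hnot
  · obtain ⟨hP, h0, hQ, hdbl, hord4, hord2, hnot⟩ :=
      curve_facts lam 1 hlam0 one_ne_zero hd1 W (by rw [hW]) (by rw [hW]; norm_num)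
        (by rw [hW]) (by rw [hW]; norm_num) (by rw [hW]) lam (lam * (1 + lam))
        (by ring) (by ring)
    exact ⟨hP, hord4, ⟨h0, by rw [two_nsmul]; exact hdbl⟩, hQ, hord2, hnot⟩
end

section
/- The elliptic curve given by y² + 4xy + y = x³ is isomorphic to the curve E37B: y² + y = x³ + x² − 3x + 1 via the substitution (x, y) ↦ (x + 1, y + 2x), and the point (0,0) on y² + 4xy + y = x³ has exact order 3. -/
open WeierstrassCurve.Affine in
/-- The curve `y² + 4xy + y = x³` is isomorphic to the curve `E37B : y² + y = x³ + x² − 3x + 1`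
via the substitution `(x, y) ↦ (x + 1, y + 2x)` (i.e. `(x, y)` satisfies the first equation if
and only if its image satisfies the second), and the point `(0,0)` on `y² + 4xy + y = x³` has
exact order `3`. -/
theorem stmt_14 (W : WeierstrassCurve.Affine ℚ)
    (hW : W = { a₁ := 4, a₂ := 0, a₃ := 1, a₄ := 0, a₆ := 0 }) :
    (∀ x y : ℚ, y ^ 2 + 4 * x * y + y = x ^ 3 ↔
      (y + 2 * x) ^ 2 + (y + 2 * x) =
        (x + 1) ^ 3 + (x + 1) ^ 2 - 3 * (x + 1) + 1) ∧
    ∃ h : W.Nonsingular 0 0, addOrderOf (Point.some _ _ h) = 3 := by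
  subst hW
  constructor
  · intro x y; constructor <;> intro h <;> nlinarith [h]
  · have h : WeierstrassCurve.Affine.Nonsingular
        { a₁ := 4, a₂ := 0, a₃ := 1, a₄ := 0, a₆ := 0 : WeierstrassCurve.Affine ℚ } 0 0 := by
      rw [nonsingular_iff]
      norm_num [equation_iff]
    refine ⟨h, ?_⟩
    let W : WeierstrassCurve.Affine ℚ := { a₁ := 4, a₂ := 0, a₃ := 1, a₄ := 0, a₆ := 0 }
    have hy : (0 : ℚ) ≠ W.negY 0 0 := by norm_num [WeierstrassCurve.Affine.negY]
    have hs : W.slope 0 0 0 0 = 0 := by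
      rw [slope_of_Y_ne rfl hy]; norm_num [WeierstrassCurve.Affine.negY]
    have hx3 : W.addX 0 0 (W.slope 0 0 0 0) = 0 := by
      rw [hs]; simp [WeierstrassCurve.Affine.addX, W]
    have hy3 : W.addY 0 0 0 (W.slope 0 0 0 0) = -1 := by
      rw [WeierstrassCurve.Affine.addY, WeierstrassCurve.Affine.negAddY, hs]
      norm_num [WeierstrassCurve.Affine.addX, WeierstrassCurve.Affine.negY]
    have h2 : W.Nonsingular 0 (-1 : ℚ) := by
      rw [nonsingular_iff]
      norm_num [equation_iff]
    have hdouble : Point.some _ _ h + Point.some _ _ h = Point.some _ _ h2 := by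
      rw [Point.add_self_of_Y_ne hy]
      simp only [hx3, hy3]
    have h3 : (3 : ℕ) • Point.some _ _ h = 0 := by
      rw [show (3 : ℕ) = 2 + 1 by rfl, add_nsmul, two_nsmul, one_nsmul, hdouble]
      exact Point.add_of_Y_eq rfl (by norm_num [WeierstrassCurve.Affine.negY])
    have hne : Point.some _ _ h ≠ 0 := by
      intro hc; cases hc
    have : Fact (Nat.Prime 3) := ⟨by norm_num⟩
    exact addOrderOf_eq_prime h3 hne
end
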